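/- For every real λ ≥ 0, the class SE(λ) is a subsemigroup of FEnd(Σ*): if s ∈ SE(λ) and t ∈ SE(λ), then the composition st ∈ SE(λ). -/
import Mathlib


open Filter Topology

namespace AutHier

variable {A : Type*}

/-- The section (state) `f|_u` of a transformation `f : Σ* → Σ*` at the word `u`. -/
def sec (f : List A → List A) (u : List A) : List A → List A :=
  fun v => (f (u ++ v)).drop u.length

/-- `f` is an endomorphism of `Σ*`: it preserves lengths and prefixes. -/
def IsEnd (f : List A → List A) : Prop :=
  (∀ u, (f u).length = u.length) ∧ ∀ u v, f u <+: f (u ++ v)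

/-- `f` is a finite-state endomorphism of `Σ*` (an element of `FEnd(Σ*)`). -/
def IsFEnd (f : List A → List A) : Prop :=
  IsEnd f ∧ {g | ∃ u, g = sec f u}.Finite

/-- The activity `α_f(n)` of a transformation `f`:
the number of words `v` of length `n` which are images of some word `u`
of length `n` whose section `f|_u` is nontrivial. -/
noncomputable def activity (f : List A → List A) (n : ℕ) : ℕ :=
  Set.ncard {v : List A | v.length = n ∧
    ∃ u : List A, u.length = n ∧ sec f u ≠ id ∧ f u = v}

/-- The class `SP(d)` of finite-state endomorphisms of
polynomial activity of degree at most `d`. -/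
def SP (A : Type*) (d : ℤ) : Set (List A → List A) :=
  {t | IsFEnd t ∧
    Tendsto (fun n : ℕ => (activity t n : ℝ) / (n : ℝ) ^ (d + 1)) atTop (𝓝 0)}

/-- The class `SE(l)` of finite-state endomorphisms of
exponential activity of growth rate at most `l`. -/
def SE (A : Type*) (l : ℝ) : Set (List A → List A) :=
  {t | IsFEnd t ∧
    limsup (fun n : ℕ => Real.log (activity t n) / (n : ℝ)) atTop ≤ l}

/-- The stateset `Q'(t)` of the pruned automaton: all sections of `t` except `id`. -/
def Qp (t : List A → List A) : Set (List A → List A) :=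
  {g | ∃ u, g = sec t u} \ {id}

/-- One-letter transition of the determinized pruned output automaton of `t`. -/
def delta (t : List A → List A) (S : Set (List A → List A)) (y : A) :
    Set (List A → List A) :=
  {s' | s' ∈ Qp t ∧ ∃ s ∈ S, ∃ x : A, s [x] = [y] ∧ sec s [x] = s'}

/-- Extended transition function `δ*` of the determinized pruned output automaton. -/
def deltaStar (t : List A → List A) (S : Set (List A → List A)) (v : List A) :
    Set (List A → List A) :=
  v.foldl (delta t) S

/-- There is a chain of `k` cycles in the determinized pruned output automaton of `t`. -/
def ChainOfCycles (t : List A → List A) (k : ℕ) : Prop :=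
  ∃ (S : Fin k → Set (List A → List A)) (c : Fin k → List A),
    (∀ i, S i ≠ ∅) ∧ (∀ i, c i ≠ []) ∧
    (∀ h : 0 < k, ∃ v, deltaStar t {t} v = S ⟨0, h⟩) ∧
    (∀ i, deltaStar t (S i) (c i) = S i) ∧
    (∀ (i : Fin k) (h : (i : ℕ) + 1 < k),
      (∃ v, deltaStar t (S i) v = S ⟨(i : ℕ) + 1, h⟩) ∧
      ¬ (∃ v, deltaStar t (S ⟨(i : ℕ) + 1, h⟩) v = S i))

/-- The edge relation of the orbit signalizer graph `Φ`: from the vertex `v = (s,t)`,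
reading the letter `x`, with label `(x; m, ℓ)` where `m, ℓ` are the minimal integers
(`ℓ ≥ 1`) with `(s t^{m+ℓ})·x = (s t^m)·x`, the edge goes to
`v' = (r|_x, (t^ℓ)|_{r·x})` where `r = s t^m`. -/
def OSStep (v : (List A → List A) × (List A → List A)) (x : A) (m ℓ : ℕ)
    (v' : (List A → List A) × (List A → List A)) : Prop :=
  1 ≤ ℓ ∧ v.2^[m + ℓ] (v.1 [x]) = v.2^[m] (v.1 [x]) ∧
  (∀ m' ℓ' : ℕ, 1 ≤ ℓ' → v.2^[m' + ℓ'] (v.1 [x]) = v.2^[m'] (v.1 [x]) → m ≤ m') ∧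
  (∀ ℓ' : ℕ, 1 ≤ ℓ' → v.2^[m + ℓ'] (v.1 [x]) = v.2^[m] (v.1 [x]) → ℓ ≤ ℓ') ∧
  v' = (sec (v.2^[m] ∘ v.1) [x], sec (v.2^[ℓ]) ((v.2^[m] ∘ v.1) [x]))

/-- A walk of length `n` in the orbit signalizer graph `Φ`. -/
structure OSPath (A : Type*) (n : ℕ) where
  vert : Fin (n + 1) → (List A → List A) × (List A → List A)
  lett : Fin n → A
  idx : Fin n → ℕ
  per : Fin n → ℕ
  step : ∀ k : Fin n, OSStep (vert k.castSucc) (lett k) (idx k) (per k) (vert k.succ)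

/-- The inf-index-cost `i⁻(π)` of a walk with indices `idx` and periods `per`. -/
def iminusCost {n : ℕ} (idx per : Fin n → ℕ) : ℕ :=
  ∑ k : Fin n, if idx k = 0 then 0
    else (idx k - 1) * (∏ j ∈ Finset.univ.filter (· < k), per j) + 1

/-- The sup-index-cost `i⁺(π)` of a walk with indices `idx` and periods `per`. -/
def iplusCost {n : ℕ} (idx per : Fin n → ℕ) : ℕ :=
  ∑ k : Fin n, (∏ j ∈ Finset.univ.filter (· < k), per j) * idx k

/-- The period-cost `p(π)` of a walk with periods `per`. -/
def pCost {n : ℕ} (per : Fin n → ℕ) : ℕ :=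
  ∏ k : Fin n, per k

/-- The walk `w` starts at the vertex `(id, t)`, i.e. it is a walk in `Φ(t)` from its root. -/
def IsWalkFrom {n : ℕ} (t : List A → List A) (w : OSPath A n) : Prop :=
  w.vert 0 = (id, t)

/-- The vertex `v` is accessible from `(id, t)` in `Φ`, i.e. `v` is a vertex of `Φ(t)`. -/
def OSReach (t : List A → List A) (v : (List A → List A) × (List A → List A)) : Prop :=
  ∃ n : ℕ, ∃ w : OSPath A n, IsWalkFrom t w ∧ w.vert (Fin.last n) = v

/-- The set of inf-index-costs of walks in `Φ(t)` from `(id, t)`. -/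
def IminusCosts (t : List A → List A) : Set ℕ :=
  {c | ∃ n : ℕ, ∃ w : OSPath A n, IsWalkFrom t w ∧ c = iminusCost w.idx w.per}

/-- The set of sup-index-costs of walks in `Φ(t)` from `(id, t)`. -/
def IplusCosts (t : List A → List A) : Set ℕ :=
  {c | ∃ n : ℕ, ∃ w : OSPath A n, IsWalkFrom t w ∧ c = iplusCost w.idx w.per}

/-- The set of period-costs of walks in `Φ(t)` from `(id, t)`. -/
def PCosts (t : List A → List A) : Set ℕ :=
  {c | ∃ n : ℕ, ∃ w : OSPath A n, IsWalkFrom t w ∧ c = pCost w.per}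

/-- `w` is a simple cycle of `Φ(t)`: a closed walk of positive length, lying in `Φ(t)`,
with no repeated vertices. -/
def IsSimpleCycle {n : ℕ} (t : List A → List A) (w : OSPath A n) : Prop :=
  1 ≤ n ∧ OSReach t (w.vert 0) ∧ w.vert (Fin.last n) = w.vert 0 ∧
  ∀ j k : Fin (n + 1), (j : ℕ) < n → (k : ℕ) < n → w.vert j = w.vert k → j = k


/-! ### Auxiliary lemmas -/

lemma end_split {s : List A → List A} (hs : IsEnd s) (u v : List A) :
    s (u ++ v) = s u ++ sec s u v := by
  have h : s u = (s (u ++ v)).take u.length := by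
    rw [← hs.1 u]; exact List.prefix_iff_eq_take.mp (hs.2 u v)
  rw [sec, h, List.take_append_drop]

lemma sec_comp {s t : List A → List A} (hs : IsEnd s) (ht : IsEnd t) (u : List A) :
    sec (fun w => t (s w)) u = (sec t (s u)) ∘ (sec s u) := by
  funext v
  show List.drop u.length (t (s (u ++ v))) = sec t (s u) (sec s u v)
  rw [end_split hs u v, end_split ht (s u) (sec s u v),
    List.drop_left' (by rw [ht.1, hs.1])]

lemma isEnd_comp {s t : List A → List A} (hs : IsEnd s) (ht : IsEnd t) :
    IsEnd (fun u => t (s u)) := by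
  constructor
  · intro u; show (t (s u)).length = u.length; rw [ht.1, hs.1]
  · intro u v
    show t (s u) <+: t (s (u ++ v))
    rw [end_split hs u v]
    exact ht.2 (s u) (sec s u v)

lemma isFEnd_comp {s t : List A → List A} (hs : IsFEnd s) (ht : IsFEnd t) :
    IsFEnd (fun u => t (s u)) := by
  refine ⟨isEnd_comp hs.1 ht.1, ?_⟩
  apply Set.Finite.subset (Set.Finite.image2 (fun g h => g ∘ h) ht.2 hs.2)
  rintro g ⟨u, rfl⟩
  rw [sec_comp hs.1 ht.1]
  exact Set.mem_image2_of_mem ⟨s u, rfl⟩ ⟨u, rfl⟩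

/-- The activity set of `f` at level `n`. -/
lemma activity_set_subset (f : List A → List A) (n : ℕ) :
    {v : List A | v.length = n ∧ ∃ u : List A, u.length = n ∧ sec f u ≠ id ∧ f u = v}
      ⊆ {v : List A | v.length = n} :=
  fun _ hv => hv.1

lemma activity_set_finite [Finite A] (f : List A → List A) (n : ℕ) :
    {v : List A | v.length = n ∧ ∃ u : List A, u.length = n ∧ sec f u ≠ id ∧ f u = v}.Finite :=
  (List.finite_length_eq A n).subset (activity_set_subset f n)

lemma activity_le [Finite A] (f : List A → List A) (n : ℕ) :
    activity f n ≤ {v : List A | v.length = n}.ncard :=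
  Set.ncard_le_ncard (activity_set_subset f n) (List.finite_length_eq A n)

lemma activity_comp_le [Finite A] {s t : List A → List A}
    (hs : IsEnd s) (ht : IsEnd t) (n : ℕ) :
    activity (fun u => t (s u)) n ≤ activity t n + activity s n := by
  classical
  set F : List A → List A := fun u => t (s u) with hF
  set St := {v : List A | v.length = n ∧ ∃ u : List A, u.length = n ∧ sec t u ≠ id ∧ t u = v}
  set Ss := {v : List A | v.length = n ∧ ∃ u : List A, u.length = n ∧ sec s u ≠ id ∧ s u = v}
  have hsub : {v : List A | v.length = n ∧
      ∃ u : List A, u.length = n ∧ sec F u ≠ id ∧ F u = v} ⊆ St ∪ t '' Ss := by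
    rintro v ⟨hv, u, hu, hne, rfl⟩
    by_cases h : sec t (s u) = id
    · have hsne : sec s u ≠ id := by
        intro h'
        apply hne
        rw [hF, sec_comp hs ht u, h, h']
        rfl
      right
      exact ⟨s u, ⟨(hs.1 u).trans hu, u, hu, hsne, rfl⟩, rfl⟩
    · left
      exact ⟨hv, s u, (hs.1 u).trans hu, h, rfl⟩
  calc activity F n ≤ (St ∪ t '' Ss).ncard :=
        Set.ncard_le_ncard hsub
          ((activity_set_finite t n).union ((activity_set_finite s n).image t))
    _ ≤ St.ncard + (t '' Ss).ncard := Set.ncard_union_le St (t '' Ss)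
    _ ≤ activity t n + activity s n := by
        apply Nat.add_le_add le_rfl
        exact Set.ncard_image_le (activity_set_finite s n)

lemma ncard_length_eq (A : Type*) [Fintype A] (n : ℕ) :
    {v : List A | v.length = n}.ncard = Fintype.card A ^ n := by
  have e : {v : List A | v.length = n} ≃ List.Vector A n := Equiv.refl _
  rw [← Nat.card_coe_set_eq, Nat.card_congr e, Nat.card_eq_fintype_card,
    card_vector]

lemma log_nat_mono {a b : ℕ} (h : a ≤ b) : Real.log a ≤ Real.log b := by
  rcases Nat.eq_zero_or_pos a with rfl | ha
  · simpa using Real.log_natCast_nonneg b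
  · exact Real.log_le_log (by exact_mod_cast ha) (by exact_mod_cast h)

lemma log_add_le (a b : ℕ) :
    Real.log (a + b) ≤ Real.log 2 + max (Real.log a) (Real.log b) := by
  have hmax : Real.log ((max a b : ℕ)) = max (Real.log a) (Real.log b) := by
    rcases le_total a b with h | h
    · rw [max_eq_right h, max_eq_right (log_nat_mono h)]
    · rw [max_eq_left h, max_eq_left (log_nat_mono h)]
  rcases Nat.eq_zero_or_pos (max a b) with hm | hm
  · have ha : a = 0 := Nat.le_zero.mp (hm ▸ le_max_left a b)
    have hb : b = 0 := Nat.le_zero.mp (hm ▸ le_max_right a b)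
    subst ha; subst hb
    simp [Real.log_nonneg (by norm_num : (1:ℝ) ≤ 2)]
  · have h1 : (a + b : ℕ) ≤ 2 * max a b := by
      have := le_max_left a b; have := le_max_right a b; omega
    have h2 := log_nat_mono h1
    push_cast at h2
    refine h2.trans (le_of_eq ?_)
    rw [show ((2:ℝ) * max (a:ℝ) b) = 2 * ((max a b : ℕ) : ℝ) by push_cast; ring,
      Real.log_mul (by norm_num) (by exact_mod_cast hm.ne'), hmax]

/-- For every real `λ ≥ 0`, the class `SE(λ)` is a subsemigroup of `FEnd(Σ*)`. -/
theorem SE_mul_mem {A : Type*} [Fintype A] (l : ℝ) (hl : 0 ≤ l)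
    (s t : List A → List A) (hs : s ∈ SE A l) (ht : t ∈ SE A l) :
    (fun u => t (s u)) ∈ SE A l := by
  obtain ⟨hsF, hsl⟩ := hs
  obtain ⟨htF, htl⟩ := ht
  refine ⟨isFEnd_comp hsF htF, ?_⟩
  -- notation
  set F : List A → List A := fun u => t (s u) with hF
  set gF : ℕ → ℝ := fun n => Real.log (activity F n) / n with hgF
  set gs : ℕ → ℝ := fun n => Real.log (activity s n) / n with hgs
  set gt : ℕ → ℝ := fun n => Real.log (activity t n) / n with hgt
  have hnonneg : ∀ (f : List A → List A) (n : ℕ),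
      0 ≤ Real.log (activity f n) / n := fun f n =>
    div_nonneg (Real.log_natCast_nonneg _) (Nat.cast_nonneg n)
  -- boundedness above by log of the number of words
  have hbdd : ∀ f : List A → List A, IsBoundedUnder (· ≤ ·) atTop
      (fun n : ℕ => Real.log (activity f n) / n) := by
    intro f
    refine ⟨Real.log (Fintype.card A), eventually_map.mpr (Eventually.of_forall fun n => ?_)⟩
    rcases Nat.eq_zero_or_pos n with rfl | hn
    · simpa using Real.log_natCast_nonneg (Fintype.card A)
    · rw [div_le_iff₀ (by exact_mod_cast hn)]
      have h1 : activity f n ≤ Fintype.card A ^ n :=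
        (activity_le f n).trans_eq (ncard_length_eq A n)
      have h2 := log_nat_mono h1
      push_cast at h2
      rw [Real.log_pow] at h2
      exact h2.trans (le_of_eq (mul_comm _ _))
  -- main estimate
  refine le_of_forall_pos_le_add fun ε hε => ?_
  have hev : ∀ᶠ n in atTop, gF n ≤ l + ε := by
    have h1 : ∀ᶠ n in atTop, gs n < l + ε / 2 :=
      eventually_lt_of_limsup_lt (lt_of_le_of_lt hsl (by linarith)) (hbdd s)
    have h2 : ∀ᶠ n in atTop, gt n < l + ε / 2 :=
      eventually_lt_of_limsup_lt (lt_of_le_of_lt htl (by linarith)) (hbdd t)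
    have h3 : ∀ᶠ n : ℕ in atTop, Real.log 2 / n ≤ ε / 2 :=
      (tendsto_const_div_atTop_nhds_zero_nat (Real.log 2)).eventually
        (eventually_le_nhds (by linarith))
    filter_upwards [h1, h2, h3, eventually_ge_atTop 1] with n h1 h2 h3 hn1
    have hnpos : (0:ℝ) < n := by exact_mod_cast hn1
    have key : Real.log (activity F n) ≤
        Real.log 2 + max (Real.log (activity t n)) (Real.log (activity s n)) := by
      calc Real.log (activity F n)
          ≤ Real.log ((activity t n + activity s n : ℕ)) :=
            log_nat_mono (activity_comp_le hsF.1 htF.1 n)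
        _ ≤ _ := by push_cast; exact log_add_le _ _
    have : gF n ≤ Real.log 2 / n + max (gt n) (gs n) := by
      rw [hgF]
      calc Real.log (activity F n) / n
          ≤ (Real.log 2 + max (Real.log (activity t n)) (Real.log (activity s n))) / n := by
            gcongr
        _ = Real.log 2 / n + max (Real.log (activity t n)) (Real.log (activity s n)) / n := by
            ring
        _ = Real.log 2 / n + max (gt n) (gs n) := by
            rw [hgt, hgs]
            congr 1
            exact (max_div_div_right hnpos.le _ _).symm
    calc gF n ≤ Real.log 2 / n + max (gt n) (gs n) := this
      _ ≤ ε / 2 + (l + ε / 2) := by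
          apply add_le_add h3
          exact max_le h2.le h1.le
      _ = l + ε := by ring
  exact limsup_le_of_le (isCoboundedUnder_le_of_le atTop fun n => hnonneg F n) hev


end AutHier
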